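/- Let n' be a positive integer with 3 ∤ n', set n = 3n' and D = −27n'², and let (x₀, y₀) be a rational point on y² = 4x³ − 27D with x₀ ≠ 0. Then the 3-adic valuation v₃((y₀ − 9n)/(y₀ + 9n)) = v₃((y₀ − 27n')/(y₀ + 27n')) is divisible by 3. -/

import Mathlib

/-- Let `n'` be a positive integer with `3 ∤ n'`, set `n = 3n'` and `D = −27n'²`,
and let `(x₀, y₀)` be a rational point on `y² = 4x³ − 27D = 4x³ + 729n'²` with
`x₀ ≠ 0`.  Then the 3-adic valuation of
`(y₀ − 9n)/(y₀ + 9n) = (y₀ − 27n')/(y₀ + 27n')` is divisible by 3. -/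
theorem three_adic_valuation_divisible (n' : ℕ) (hn' : 0 < n') (h3 : ¬(3 ∣ n'))
    (x₀ y₀ : ℚ)
    (hE : y₀ ^ 2 = 4 * x₀ ^ 3 + 729 * (n' : ℚ) ^ 2) (hx₀ : x₀ ≠ 0) :
    (3 : ℤ) ∣ padicValRat 3 ((y₀ - 27 * n') / (y₀ + 27 * n')) := by
  set a : ℚ := y₀ - 27 * n' with ha_def
  set b : ℚ := y₀ + 27 * n' with hb_def
  have hab : a * b = 4 * x₀ ^ 3 := by rw [ha_def, hb_def]; ring_nf; linarith [hE]
  have hx3 : (4 : ℚ) * x₀ ^ 3 ≠ 0 := by positivity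
  have ha : a ≠ 0 := fun h => hx3 (by rw [← hab, h, zero_mul])
  have hb : b ≠ 0 := fun h => hx3 (by rw [← hab, h, mul_zero])
  -- valuation of 4 is 0
  have hv4 : padicValRat 3 4 = 0 := by
    rw [show (4 : ℚ) = ((4 : ℕ) : ℚ) by norm_num, padicValRat.of_nat,
      padicValNat.eq_zero_of_not_dvd (by norm_num)]
    simp
  have hsum : padicValRat 3 a + padicValRat 3 b = 3 * padicValRat 3 x₀ := by
    rw [← padicValRat.mul ha hb, hab, padicValRat.mul (by norm_num) (pow_ne_zero _ hx₀),
      hv4, padicValRat.pow x₀]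
    push_cast
    ring
  rw [padicValRat.div ha hb]
  by_cases hvv : padicValRat 3 a = padicValRat 3 b
  · rw [hvv]; simp
  · -- v(a - b) = v(-(54 n')) = 3
    have hdiff : a + (-b) = -(54 * (n' : ℚ)) := by rw [ha_def, hb_def]; ring
    have hn'0 : (n' : ℚ) ≠ 0 := Nat.cast_ne_zero.mpr hn'.ne'
    have hv54 : padicValRat 3 (-(54 * (n' : ℚ))) = 3 := by
      rw [padicValRat.neg, show (54 : ℚ) * n' = 27 * ((2 * n' : ℕ) : ℚ) by push_cast; ring,
        padicValRat.mul (by norm_num) (by positivity),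
        show (27 : ℚ) = (3 : ℚ) ^ 3 by norm_num,
        padicValRat.pow (3 : ℚ), show (3 : ℚ) = ((3 : ℕ) : ℚ) by norm_num,
        padicValRat.self (by norm_num : 1 < 3),
        padicValRat.of_nat, padicValNat.eq_zero_of_not_dvd]
      · simp
      · intro h
        rcases (Nat.Prime.dvd_mul (by norm_num)).mp h with h | h
        · norm_num at h
        · exact h3 h
    have hvb : padicValRat 3 (-b) = padicValRat 3 b := padicValRat.neg b
    have hmin : min (padicValRat 3 a) (padicValRat 3 b) = 3 := by
      have := padicValRat.add_eq_min (p := 3) (q := a) (r := -b)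
        (by rw [hdiff]; simp [hn'0]) ha
        (neg_ne_zero.mpr hb) (by rw [hvb]; exact hvv)
      rw [hdiff, hv54, hvb] at this
      omega
    rcases min_cases (padicValRat 3 a) (padicValRat 3 b) with ⟨h1, _⟩ | ⟨h1, _⟩ <;> omega
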